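/- Let G be a group, A ⊆ G, and define the relation φ_A(x;(y,z)) on G × G² by x ∈ Ay △ Az. If the relation ψ(x,y) given by x ∈ Ay is k-stable (k ≥ 2), then φ_A is n-stable where n = R(R(k,k+1), R(k,k+1)) + 1, with R the two-color graph Ramsey number. -/

import Mathlib

def RamseyProp (N k l : ℕ) : Prop :=
  ∀ c : Fin N → Fin N → Bool, (∀ i j, c i j = c j i) →
    (∃ s : Finset (Fin N), s.card = k ∧ ∀ i ∈ s, ∀ j ∈ s, i ≠ j → c i j = true) ∨
    (∃ s : Finset (Fin N), s.card = l ∧ ∀ i ∈ s, ∀ j ∈ s, i ≠ j → c i j = false)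

/-- The two-color Ramsey number. -/
noncomputable def ramsey (k l : ℕ) : ℕ := sInf {N | RamseyProp N k l}

lemma ramseyProp_subset {N k l : ℕ} (h : RamseyProp N k l) {M : ℕ}
    (c : Fin M → Fin M → Bool) (hc : ∀ i j, c i j = c j i)
    (V : Finset (Fin M)) (hV : N ≤ V.card) :
    (∃ s : Finset (Fin M), s ⊆ V ∧ s.card = k ∧ ∀ i ∈ s, ∀ j ∈ s, i ≠ j → c i j = true) ∨
    (∃ s : Finset (Fin M), s ⊆ V ∧ s.card = l ∧ ∀ i ∈ s, ∀ j ∈ s, i ≠ j → c i j = false) := by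
  obtain ⟨V', hV'sub, hV'card⟩ := Finset.exists_subset_card_eq hV
  set e := V'.orderEmbOfFin hV'card with he
  have hmem : ∀ i, e i ∈ V := fun i => hV'sub (Finset.orderEmbOfFin_mem _ _ _)
  have hinj : Function.Injective e := e.injective
  rcases h (fun i j => c (e i) (e j)) (fun i j => hc _ _) with ⟨s, hcard, hs⟩ | ⟨s, hcard, hs⟩
  · left
    refine ⟨s.map ⟨e, hinj⟩, ?_, ?_, ?_⟩
    · intro i hi
      obtain ⟨i', _, rfl⟩ := Finset.mem_map.1 hi
      exact hmem i'
    · rw [Finset.card_map, hcard]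
    · intro i hi j hj hij
      obtain ⟨i', hi', rfl⟩ := Finset.mem_map.1 hi
      obtain ⟨j', hj', rfl⟩ := Finset.mem_map.1 hj
      exact hs i' hi' j' hj' (fun h' => hij (congrArg _ h'))
  · right
    refine ⟨s.map ⟨e, hinj⟩, ?_, ?_, ?_⟩
    · intro i hi
      obtain ⟨i', _, rfl⟩ := Finset.mem_map.1 hi
      exact hmem i'
    · rw [Finset.card_map, hcard]
    · intro i hi j hj hij
      obtain ⟨i', hi', rfl⟩ := Finset.mem_map.1 hi
      obtain ⟨j', hj', rfl⟩ := Finset.mem_map.1 hj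
      exact hs i' hi' j' hj' (fun h' => hij (congrArg _ h'))

lemma ramseyProp_step {k l N₁ N₂ : ℕ} (h₁ : RamseyProp N₁ k (l+1)) (h₂ : RamseyProp N₂ (k+1) l) :
    RamseyProp (N₁ + N₂ + 1) (k+1) (l+1) := by
  intro c hsym
  set v : Fin (N₁+N₂+1) := Fin.last _ with hv
  set U : Finset (Fin (N₁+N₂+1)) := Finset.univ.erase v with hU
  have hUcard : U.card = N₁ + N₂ := by
    rw [hU, Finset.card_erase_of_mem (Finset.mem_univ v), Finset.card_univ, Fintype.card_fin]; omega
  set Ut := U.filter (fun u => c v u = true) with hUt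
  set Uf := U.filter (fun u => ¬ (c v u = true)) with hUf
  have hsplit : Ut.card + Uf.card = N₁ + N₂ := by
    rw [hUt, hUf, Finset.card_filter_add_card_filter_not, hUcard]
  by_cases hcase : N₁ ≤ Ut.card
  · rcases ramseyProp_subset h₁ c hsym Ut hcase with ⟨s, hsub, hcard, hs⟩ | ⟨s, _, hcard, hs⟩
    · left
      have hvs : v ∉ s := by
        intro hv'
        have h' := hsub hv'
        rw [hUt, Finset.mem_filter, hU, Finset.mem_erase] at h'
        exact h'.1.1 rfl
      refine ⟨insert v s, ?_, ?_⟩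
      · rw [Finset.card_insert_of_notMem hvs, hcard]
      · intro i hi j hj hij
        rcases Finset.mem_insert.1 hi with rfl | hi' <;> rcases Finset.mem_insert.1 hj with rfl | hj'
        · exact absurd rfl hij
        · have h' := hsub hj'
          rw [hUt, Finset.mem_filter] at h'
          exact h'.2
        · have h' := hsub hi'
          rw [hUt, Finset.mem_filter] at h'
          rw [hsym]; exact h'.2
        · exact hs i hi' j hj' hij
    · exact Or.inr ⟨s, hcard, hs⟩
  · have hcase2 : N₂ ≤ Uf.card := by omega
    rcases ramseyProp_subset h₂ c hsym Uf hcase2 with ⟨s, _, hcard, hs⟩ | ⟨s, hsub, hcard, hs⟩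
    · exact Or.inl ⟨s, hcard, hs⟩
    · right
      have hvs : v ∉ s := by
        intro hv'
        have h' := hsub hv'
        rw [hUf, Finset.mem_filter, hU, Finset.mem_erase] at h'
        exact h'.1.1 rfl
      refine ⟨insert v s, ?_, ?_⟩
      · rw [Finset.card_insert_of_notMem hvs, hcard]
      · intro i hi j hj hij
        rcases Finset.mem_insert.1 hi with rfl | hi' <;> rcases Finset.mem_insert.1 hj with rfl | hj'
        · exact absurd rfl hij
        · have h' := hsub hj'
          rw [hUf, Finset.mem_filter] at h'
          cases hcc : c v j with
          | false => rfl
          | true => exact absurd hcc h'.2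
        · have h' := hsub hi'
          rw [hUf, Finset.mem_filter] at h'
          rw [hsym]
          cases hcc : c v i with
          | false => rfl
          | true => exact absurd hcc h'.2
        · exact hs i hi' j hj' hij

lemma ramseyProp_exists (k : ℕ) : ∀ l : ℕ, ∃ N, RamseyProp N k l := by
  induction k with
  | zero => exact fun l => ⟨0, fun c _ => Or.inl ⟨∅, by simp⟩⟩
  | succ k ih =>
    intro l
    induction l with
    | zero => exact ⟨0, fun c _ => Or.inr ⟨∅, by simp⟩⟩
    | succ l ihl =>
      obtain ⟨N₁, h₁⟩ := ih (l+1)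
      obtain ⟨N₂, h₂⟩ := ihl
      exact ⟨N₁+N₂+1, ramseyProp_step h₁ h₂⟩

lemma ramsey_isRamsey (k l : ℕ) : RamseyProp (ramsey k l) k l :=
  Nat.sInf_mem (ramseyProp_exists k l)


lemma stable_core {G : Type*} [Group G] (A : Set G) (k : ℕ)
    (hst : ¬ ∃ (a b : Fin k → G), ∀ i j, (a i ∈ (fun t => t * b j) '' A ↔ i ≤ j))
    {K : ℕ} (hK : RamseyProp K k (k+1))
    (x y z : Fin K → G) (β : Bool)
    (hxor : ∀ p q : Fin K, p ≤ q →
      ((x p ∈ (fun t => t * y q) '' A) ↔ ¬ (x p ∈ (fun t => t * z q) '' A)))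
    (heq : ∀ p q : Fin K, q < p →
      ((x p ∈ (fun t => t * y q) '' A) ↔ (x p ∈ (fun t => t * z q) '' A)))
    (hbel : ∀ p q : Fin K, q < p → ((x p ∈ (fun t => t * y q) '' A) ↔ β = true)) :
    False := by
  classical
  set E : Fin K → Fin K → Prop := fun p q => x p ∈ (fun t => t * y q) '' A with hEdef
  set Z : Fin K → Fin K → Prop := fun p q => x p ∈ (fun t => t * z q) '' A with hZdef
  have noLadLe : ∀ (r : Fin k → Fin K) (w : Fin k → G),
      (∀ l m : Fin k, ((x (r l) ∈ (fun t => t * w m) '' A) ↔ l ≤ m)) → False := by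
    intro r w h
    exact hst ⟨fun l => x (r l), w, h⟩
  have noLadGe : ∀ (r : Fin k → Fin K) (w : Fin k → G),
      (∀ l m : Fin k, ((x (r l) ∈ (fun t => t * w m) '' A) ↔ m ≤ l)) → False := by
    intro r w h
    exact noLadLe (fun l => r l.rev) (fun m => w m.rev)
      (fun l m => (h l.rev m.rev).trans Fin.rev_le_rev)
  rcases hK (fun p q => decide (E (min p q) (max p q) ↔ (E (max p q) (max p q) ↔ β = false)))
      (fun i j => by simp only [min_comm i j, max_comm i j]) with
    ⟨s, hcard, hmono⟩ | ⟨s, hcard, hmono⟩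
  · -- true clique of size k
    set g := s.orderEmbOfFin hcard with hgdef
    have hgmem : ∀ p, g p ∈ s := fun p => Finset.orderEmbOfFin_mem s hcard p
    have hglt : ∀ {p q : Fin k}, p < q → g p < g q := fun h => g.strictMono h
    have hg : ∀ {p q : Fin k}, p < q →
        (E (g p) (g q) ↔ (E (g q) (g q) ↔ β = false)) := by
      intro p q hpq
      have h1 : decide (E (min (g p) (g q)) (max (g p) (g q)) ↔
          (E (max (g p) (g q)) (max (g p) (g q)) ↔ β = false)) = true :=
        hmono _ (hgmem p) _ (hgmem q) (ne_of_lt (hglt hpq))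
      rw [min_eq_left (hglt hpq).le, max_eq_right (hglt hpq).le] at h1
      exact of_decide_eq_true h1
    cases β with
    | false =>
      have key : ∀ m : Fin k, ∃ w : G,
          ∀ l : Fin k, ((x (g l) ∈ (fun t => t * w) '' A) ↔ l ≤ m) := by
        intro m
        by_cases hD : E (g m) (g m)
        · refine ⟨y (g m), fun l => ?_⟩
          show E (g l) (g m) ↔ l ≤ m
          rcases lt_trichotomy l m with h | rfl | h
          · exact iff_of_true ((hg h).2 (iff_of_true hD rfl)) h.le
          · exact iff_of_true hD le_rfl
          · refine iff_of_false (fun hE => ?_) (not_le.2 h)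
            have := (hbel _ _ (hglt h)).1 hE
            simp at this
        · refine ⟨z (g m), fun l => ?_⟩
          show Z (g l) (g m) ↔ l ≤ m
          rcases lt_trichotomy l m with h | rfl | h
          · refine iff_of_true ?_ h.le
            by_contra hZ
            exact hD (((hg h).1 ((hxor _ _ (hglt h).le).2 hZ)).2 rfl)
          · refine iff_of_true ?_ le_rfl
            by_contra hZ
            exact hD ((hxor _ _ le_rfl).2 hZ)
          · refine iff_of_false (fun hZ => ?_) (not_le.2 h)
            have hE := (heq _ _ (hglt h)).2 hZ
            have := (hbel _ _ (hglt h)).1 hE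
            simp at this
      choose w hw using key
      exact noLadLe g w (fun l m => hw m l)
    | true =>
      have key : ∀ m : Fin k, ∃ w : G,
          ∀ l : Fin k, ((x (g l) ∈ (fun t => t * w) '' A) ↔ m ≤ l) := by
        intro m
        by_cases hD : E (g m) (g m)
        · refine ⟨y (g m), fun l => ?_⟩
          show E (g l) (g m) ↔ m ≤ l
          rcases lt_trichotomy l m with h | rfl | h
          · refine iff_of_false (fun hE => ?_) (not_le.2 h)
            simpa using ((hg h).1 hE).1 hD
          · exact iff_of_true hD le_rfl
          · exact iff_of_true ((hbel _ _ (hglt h)).2 rfl) h.le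
        · refine ⟨z (g m), fun l => ?_⟩
          show Z (g l) (g m) ↔ m ≤ l
          rcases lt_trichotomy l m with h | rfl | h
          · refine iff_of_false (fun hZ => ?_) (not_le.2 h)
            have hE : E (g l) (g m) := (hg h).2 (iff_of_false hD (by simp))
            exact (hxor _ _ (hglt h).le).1 hE hZ
          · refine iff_of_true ?_ le_rfl
            by_contra hZ
            exact hD ((hxor _ _ le_rfl).2 hZ)
          · exact iff_of_true ((heq _ _ (hglt h)).1 ((hbel _ _ (hglt h)).2 rfl)) h.le
      choose w hw using key
      exact noLadGe g w (fun l m => hw m l)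
  · -- false clique of size k+1
    set g := s.orderEmbOfFin hcard with hgdef
    have hgmem : ∀ p, g p ∈ s := fun p => Finset.orderEmbOfFin_mem s hcard p
    have hglt : ∀ {p q : Fin (k+1)}, p < q → g p < g q := fun h => g.strictMono h
    have hg : ∀ {p q : Fin (k+1)}, p < q →
        ¬ (E (g p) (g q) ↔ (E (g q) (g q) ↔ β = false)) := by
      intro p q hpq
      have h1 : decide (E (min (g p) (g q)) (max (g p) (g q)) ↔
          (E (max (g p) (g q)) (max (g p) (g q)) ↔ β = false)) = false :=
        hmono _ (hgmem p) _ (hgmem q) (ne_of_lt (hglt hpq))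
      rw [min_eq_left (hglt hpq).le, max_eq_right (hglt hpq).le] at h1
      exact of_decide_eq_false h1
    cases β with
    | false =>
      have key : ∀ m : Fin k, ∃ w : G,
          ∀ l : Fin k, ((x (g l.castSucc) ∈ (fun t => t * w) '' A) ↔ l ≤ m) := by
        intro m
        by_cases hD : E (g m.succ) (g m.succ)
        · refine ⟨z (g m.succ), fun l => ?_⟩
          show Z (g l.castSucc) (g m.succ) ↔ l ≤ m
          rcases lt_trichotomy l.castSucc m.succ with h | h | h
          · refine iff_of_true ?_ (Fin.castSucc_lt_succ_iff.1 h)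
            by_contra hZ
            have hE := (hxor _ _ (hglt h).le).2 hZ
            exact hg h (iff_of_true hE (iff_of_true hD rfl))
          · have hlm : m < l := Fin.castSucc_lt_castSucc_iff.1
              (by rw [h]; exact (Fin.castSucc_lt_succ : m.castSucc < m.succ))
            rw [h]
            exact iff_of_false ((hxor _ _ le_rfl).1 hD) (not_le.2 hlm)
          · have hlm : m < l :=
              Fin.castSucc_lt_castSucc_iff.1 (((Fin.castSucc_lt_succ : m.castSucc < m.succ)).trans h)
            refine iff_of_false (fun hZ => ?_) (not_le.2 hlm)
            have hE := (heq _ _ (hglt h)).2 hZ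
            simpa using (hbel _ _ (hglt h)).1 hE
        · refine ⟨y (g m.succ), fun l => ?_⟩
          show E (g l.castSucc) (g m.succ) ↔ l ≤ m
          rcases lt_trichotomy l.castSucc m.succ with h | h | h
          · refine iff_of_true ?_ (Fin.castSucc_lt_succ_iff.1 h)
            by_contra hE
            exact hg h (iff_of_false hE (fun hiff => hD (hiff.2 rfl)))
          · have hlm : m < l := Fin.castSucc_lt_castSucc_iff.1
              (by rw [h]; exact (Fin.castSucc_lt_succ : m.castSucc < m.succ))
            rw [h]
            exact iff_of_false hD (not_le.2 hlm)
          · have hlm : m < l :=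
              Fin.castSucc_lt_castSucc_iff.1 (((Fin.castSucc_lt_succ : m.castSucc < m.succ)).trans h)
            refine iff_of_false (fun hE => ?_) (not_le.2 hlm)
            simpa using (hbel _ _ (hglt h)).1 hE
      choose w hw using key
      exact noLadLe (fun l => g l.castSucc) w (fun l m => hw m l)
    | true =>
      have key : ∀ m : Fin k, ∃ w : G,
          ∀ l : Fin k, ((x (g l.succ) ∈ (fun t => t * w) '' A) ↔ m ≤ l) := by
        intro m
        by_cases hD : E (g m.castSucc) (g m.castSucc)
        · refine ⟨z (g m.castSucc), fun l => ?_⟩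
          show Z (g l.succ) (g m.castSucc) ↔ m ≤ l
          rcases lt_trichotomy m.castSucc l.succ with h | h | h
          · refine iff_of_true ?_ (Fin.castSucc_lt_succ_iff.1 h)
            exact (heq _ _ (hglt h)).1 ((hbel _ _ (hglt h)).2 rfl)
          · have hlm : l < m := Fin.castSucc_lt_castSucc_iff.1
              (by rw [h]; exact (Fin.castSucc_lt_succ : l.castSucc < l.succ))
            rw [h] at hD ⊢
            exact iff_of_false ((hxor _ _ le_rfl).1 hD) (not_le.2 hlm)
          · have hlm : l < m :=
              Fin.castSucc_lt_castSucc_iff.1 (((Fin.castSucc_lt_succ : l.castSucc < l.succ)).trans h)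
            refine iff_of_false (fun hZ => ?_) (not_le.2 hlm)
            have hE : E (g l.succ) (g m.castSucc) := by
              by_contra hE
              exact hg h (iff_of_false hE (fun hiff => by simpa using hiff.1 hD))
            exact (hxor _ _ (hglt h).le).1 hE hZ
        · refine ⟨y (g m.castSucc), fun l => ?_⟩
          show E (g l.succ) (g m.castSucc) ↔ m ≤ l
          rcases lt_trichotomy m.castSucc l.succ with h | h | h
          · exact iff_of_true ((hbel _ _ (hglt h)).2 rfl) (Fin.castSucc_lt_succ_iff.1 h)
          · have hlm : l < m := Fin.castSucc_lt_castSucc_iff.1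
              (by rw [h]; exact (Fin.castSucc_lt_succ : l.castSucc < l.succ))
            rw [h] at hD ⊢
            exact iff_of_false hD (not_le.2 hlm)
          · have hlm : l < m :=
              Fin.castSucc_lt_castSucc_iff.1 (((Fin.castSucc_lt_succ : l.castSucc < l.succ)).trans h)
            exact iff_of_false
              (fun hE => hg h (iff_of_true hE (iff_of_false hD (by simp))))
              (not_le.2 hlm)
      choose w hw using key
      exact noLadGe (fun l => g l.succ) w (fun l m => hw m l)


/-- If the relation x ∈ Ay is k-stable (k ≥ 2), then the relation
φ_A(x;(y,z)) given by x ∈ Ay △ Az is n-stable for n = R(R(k,k+1),R(k,k+1)) + 1. -/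
theorem stmt10 {G : Type*} [Group G] (A : Set G) (k : ℕ) (hk : 2 ≤ k)
    (hst : ¬ ∃ (a b : Fin k → G), ∀ i j, (a i ∈ (fun t => t * b j) '' A ↔ i ≤ j)) :
    ¬ ∃ (a : Fin (ramsey (ramsey k (k + 1)) (ramsey k (k + 1)) + 1) → G)
        (b : Fin (ramsey (ramsey k (k + 1)) (ramsey k (k + 1)) + 1) → G × G),
      ∀ i j, (a i ∈ symmDiff ((fun t => t * (b j).1) '' A) ((fun t => t * (b j).2) '' A)
        ↔ i ≤ j) := by
  classical
  set N := ramsey (ramsey k (k+1)) (ramsey k (k+1)) with hNdef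
  rintro ⟨a, b, hab⟩
  have hxorG : ∀ i j : Fin (N+1), i ≤ j →
      ((a i ∈ (fun t => t * (b j).1) '' A) ↔ ¬ (a i ∈ (fun t => t * (b j).2) '' A)) := by
    intro i j hij
    have h1 := (hab i j).2 hij
    rw [Set.mem_symmDiff] at h1
    constructor
    · intro hE
      rcases h1 with ⟨_, hnZ⟩ | ⟨_, hnE⟩
      · exact hnZ
      · exact absurd hE hnE
    · intro hnZ
      rcases h1 with ⟨hE, _⟩ | ⟨hZ, _⟩
      · exact hE
      · exact absurd hZ hnZ
  have heqG : ∀ i j : Fin (N+1), j < i →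
      ((a i ∈ (fun t => t * (b j).1) '' A) ↔ (a i ∈ (fun t => t * (b j).2) '' A)) := by
    intro i j hij
    have h1 : ¬ (a i ∈ symmDiff ((fun t => t * (b j).1) '' A) ((fun t => t * (b j).2) '' A)) :=
      fun hm => absurd ((hab i j).1 hm) (not_le.2 hij)
    rw [Set.mem_symmDiff] at h1
    tauto
  have hM : RamseyProp N (ramsey k (k+1)) (ramsey k (k+1)) := ramsey_isRamsey _ _
  rcases hM (fun i j =>
        decide (a ((max i j).castSucc) ∈ (fun t => t * (b ((min i j).castSucc)).1) '' A))
      (fun i j => by simp only [min_comm i j, max_comm i j]) with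
    ⟨S, hScard, hSmono⟩ | ⟨S, hScard, hSmono⟩
  · set e := S.orderEmbOfFin hScard with hedef
    have hemem : ∀ p, e p ∈ S := fun p => Finset.orderEmbOfFin_mem S hScard p
    have helt : ∀ {p q}, p < q → e p < e q := fun h => e.strictMono h
    refine stable_core A k hst (ramsey_isRamsey k (k+1))
      (fun p => a ((e p).castSucc)) (fun q => (b ((e q).castSucc)).1)
      (fun q => (b ((e q).castSucc)).2) true ?_ ?_ ?_
    · intro p q hpq
      exact hxorG _ _ (Fin.castSucc_le_castSucc_iff.2 (e.le_iff_le.2 hpq))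
    · intro p q hpq
      exact heqG _ _ (Fin.castSucc_lt_castSucc_iff.2 (helt hpq))
    · intro p q hpq
      have h1 : decide (a ((max (e q) (e p)).castSucc) ∈
          (fun t => t * (b ((min (e q) (e p)).castSucc)).1) '' A) = true :=
        hSmono _ (hemem q) _ (hemem p) (ne_of_lt (helt hpq))
      rw [max_eq_right (helt hpq).le, min_eq_left (helt hpq).le] at h1
      exact iff_of_true (of_decide_eq_true h1) rfl
  · set e := S.orderEmbOfFin hScard with hedef
    have hemem : ∀ p, e p ∈ S := fun p => Finset.orderEmbOfFin_mem S hScard p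
    have helt : ∀ {p q}, p < q → e p < e q := fun h => e.strictMono h
    refine stable_core A k hst (ramsey_isRamsey k (k+1))
      (fun p => a ((e p).castSucc)) (fun q => (b ((e q).castSucc)).1)
      (fun q => (b ((e q).castSucc)).2) false ?_ ?_ ?_
    · intro p q hpq
      exact hxorG _ _ (Fin.castSucc_le_castSucc_iff.2 (e.le_iff_le.2 hpq))
    · intro p q hpq
      exact heqG _ _ (Fin.castSucc_lt_castSucc_iff.2 (helt hpq))
    · intro p q hpq
      have h1 : decide (a ((max (e q) (e p)).castSucc) ∈
          (fun t => t * (b ((min (e q) (e p)).castSucc)).1) '' A) = false :=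
        hSmono _ (hemem q) _ (hemem p) (ne_of_lt (helt hpq))
      rw [max_eq_right (helt hpq).le, min_eq_left (helt hpq).le] at h1
      exact iff_of_false (of_decide_eq_false h1) (by simp)
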